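/- arXiv:1310.4663 — 3 statements merged into one kernel-verified Lean document; each statement's English description precedes it below -/
import Mathlib

section
/- Let (Ω,Σ,ν) be a finite measure space, let λ be a finite nonnegative measure on (Ω,Σ), let B ∈ Σ, b ≥ 0 and ε > 0, and assume |λ(C) − b·ν(C)| ≤ ε·ν(B)^{1/2} for every measurable C ⊆ B. Then for every sign x on B that is mean zero with respect to ν, one has |∫_B x dλ| ≤ 2ε·ν(B)^{1/2}. -/
open MeasureTheory

/-- A *sign* on a measurable set `B` is a measurable function `x : Ω → ℝ` with
`x² = 𝟙_B`, i.e. `x` takes values `±1` on `B` and `0` off `B`. -/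
def IsSignOn {Ω : Type*} [MeasurableSpace Ω] (x : Ω → ℝ) (B : Set Ω) : Prop :=
  Measurable x ∧ ∀ t, (x t) ^ 2 = B.indicator (fun _ => (1 : ℝ)) t

/-- If `|λ C - b·ν C| ≤ ε·(ν B)^(1/2)` for every measurable `C ⊆ B`, then every sign `x`
on `B` that is mean zero with respect to `ν` satisfies `|∫_B x dλ| ≤ 2ε·(ν B)^(1/2)`. -/
theorem abs_integral_sign_le {Ω : Type*} [MeasurableSpace Ω]
    (nu lam : Measure Ω) [IsFiniteMeasure nu] [IsFiniteMeasure lam]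
    (B : Set Ω) (hB : MeasurableSet B) (b ε : ℝ) (hb : 0 ≤ b) (hε : 0 < ε)
    (h : ∀ C : Set Ω, C ⊆ B → MeasurableSet C →
      |(lam C).toReal - b * (nu C).toReal| ≤ ε * (nu B).toReal ^ (1 / 2 : ℝ)) :
    ∀ x : Ω → ℝ, IsSignOn x B → (∫ t, x t ∂nu) = 0 →
      |∫ t in B, x t ∂lam| ≤ 2 * ε * (nu B).toReal ^ (1 / 2 : ℝ) := by
  rintro x ⟨hxm, hx2⟩ hmean
  set P : Set Ω := x ⁻¹' {1} with hPdef
  set N : Set Ω := x ⁻¹' {-1} with hNdef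
  have hPm : MeasurableSet P := hxm (measurableSet_singleton _)
  have hNm : MeasurableSet N := hxm (measurableSet_singleton _)
  have hPB : P ⊆ B := by
    intro t ht
    by_contra hc
    have := hx2 t
    rw [Set.indicator_of_notMem hc] at this
    have ht1 : x t = 1 := ht
    rw [ht1] at this; norm_num at this
  have hNB : N ⊆ B := by
    intro t ht
    by_contra hc
    have := hx2 t
    rw [Set.indicator_of_notMem hc] at this
    have ht1 : x t = -1 := ht
    rw [ht1] at this; norm_num at this
  -- pointwise identity
  have hpt : ∀ t, x t = P.indicator (fun _ => (1:ℝ)) t - N.indicator (fun _ => (1:ℝ)) t := by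
    intro t
    by_cases htB : t ∈ B
    · have h2 : x t ^ 2 = 1 := by rw [hx2 t, Set.indicator_of_mem htB]
      have hm : x t * x t = 1 := by nlinarith [h2]
      rcases mul_self_eq_one_iff.mp hm with h1 | h1
      · have htP : t ∈ P := h1
        have htN : t ∉ N := by
          intro hn; have : x t = -1 := hn; rw [h1] at this; norm_num at this
        rw [Set.indicator_of_mem htP, Set.indicator_of_notMem htN, h1]; ring
      · have htN : t ∈ N := h1
        have htP : t ∉ P := by
          intro hn; have : x t = 1 := hn; rw [h1] at this; norm_num at this
        rw [Set.indicator_of_mem htN, Set.indicator_of_notMem htP, h1]; ring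
    · have h2 : x t ^ 2 = 0 := by rw [hx2 t, Set.indicator_of_notMem htB]
      have hx0 : x t = 0 := by
        have := pow_eq_zero_iff (n := 2) (by norm_num) |>.mp h2
        exact this
      have htP : t ∉ P := by intro hn; have : x t = 1 := hn; rw [hx0] at this; norm_num at this
      have htN : t ∉ N := by intro hn; have : x t = -1 := hn; rw [hx0] at this; norm_num at this
      rw [Set.indicator_of_notMem htP, Set.indicator_of_notMem htN, hx0]; ring
  have hxfun : x = fun t => P.indicator (fun _ => (1:ℝ)) t - N.indicator (fun _ => (1:ℝ)) t :=
    funext hpt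
  have hintP : ∀ (μ : Measure Ω) [IsFiniteMeasure μ],
      Integrable (P.indicator (fun _ => (1:ℝ))) μ := fun μ _ =>
    (integrable_const (1:ℝ)).indicator hPm
  have hintN : ∀ (μ : Measure Ω) [IsFiniteMeasure μ],
      Integrable (N.indicator (fun _ => (1:ℝ))) μ := fun μ _ =>
    (integrable_const (1:ℝ)).indicator hNm
  have hint : ∀ (μ : Measure Ω) [IsFiniteMeasure μ],
      ∫ t, x t ∂μ = (μ P).toReal - (μ N).toReal := by
    intro μ _
    rw [hxfun, integral_sub (hintP μ) (hintN μ), integral_indicator_const (1:ℝ) hPm,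
      integral_indicator_const (1:ℝ) hNm, smul_eq_mul, smul_eq_mul, mul_one, mul_one]
    rfl
  -- mean zero gives ν P = ν N (as reals)
  have hnuPN : (nu P).toReal = (nu N).toReal := by
    have := hint nu
    rw [hmean] at this
    linarith [this]
  -- set integral over B
  have hset : ∫ t in B, x t ∂lam = (lam P).toReal - (lam N).toReal := by
    rw [show ∫ t in B, x t ∂lam = ∫ t, x t ∂(lam.restrict B) from rfl, hint (lam.restrict B),
      Measure.restrict_apply hPm, Measure.restrict_apply hNm,
      Set.inter_eq_self_of_subset_left hPB, Set.inter_eq_self_of_subset_left hNB]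
  rw [hset]
  have h1 := h P hPB hPm
  have h2 := h N hNB hNm
  have key : (lam P).toReal - (lam N).toReal =
      ((lam P).toReal - b * (nu P).toReal) - ((lam N).toReal - b * (nu N).toReal) := by
    rw [hnuPN]; ring
  rw [key]
  calc |((lam P).toReal - b * (nu P).toReal) - ((lam N).toReal - b * (nu N).toReal)|
      ≤ |(lam P).toReal - b * (nu P).toReal| + |(lam N).toReal - b * (nu N).toReal| :=
        abs_sub _ _
    _ ≤ ε * (nu B).toReal ^ (1 / 2 : ℝ) + ε * (nu B).toReal ^ (1 / 2 : ℝ) := add_le_add h1 h2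
    _ = 2 * ε * (nu B).toReal ^ (1 / 2 : ℝ) := by ring
end

section
/- Let (Ω,Σ,ν) be a finite measure space, let λ be a finite non-atomic nonnegative measure on (Ω,Σ), let B ∈ Σ with ν(B) > 0, let b > 0 and ε > 0, and assume that |λ(C) − b·ν(C)| ≤ ε·ν(B)^{1/2} for every measurable C ⊆ B. Then for every sign x on B that is mean zero with respect to ν, there exists a measurable function x_ε : Ω → {−1,0,1} supported in B such that x_ε is a sign on its support, x_ε is mean zero with respect to λ, and b·ν({t : x_ε(t) ≠ x(t)}) ≤ 3ε·ν(B)^{1/2}. -/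
open MeasureTheory ENNReal

section Aux

variable {Ω : Type*} [MeasurableSpace Ω] (lam : Measure Ω)


lemma half_lemma [IsFiniteMeasure lam]
    (hna : ∀ A : Set Ω, MeasurableSet A → 0 < lam A →
      ∃ C, C ⊆ A ∧ MeasurableSet C ∧ 0 < lam C ∧ lam C < lam A)
    {A : Set Ω} (hA : MeasurableSet A) (h0 : 0 < lam A) :
    ∃ C, C ⊆ A ∧ MeasurableSet C ∧ 0 < lam C ∧ lam C ≤ lam A / 2 := by
  obtain ⟨C, hCA, hCm, hC0, hClt⟩ := hna A hA h0
  by_cases hle : lam C ≤ lam A / 2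
  · exact ⟨C, hCA, hCm, hC0, hle⟩
  · have hd : lam (A \ C) = lam A - lam C :=
      measure_diff hCA hCm.nullMeasurableSet (measure_ne_top _ _)
    refine ⟨A \ C, Set.diff_subset, hA.diff hCm, ?_, ?_⟩
    · rw [hd]; exact tsub_pos_of_lt hClt
    · rw [hd]
      push_neg at hle
      have h2 : lam A ≤ lam C + lam A / 2 := by
        calc lam A = lam A / 2 + lam A / 2 := (ENNReal.add_halves _).symm
        _ ≤ lam C + lam A / 2 := by gcongr
      exact tsub_le_iff_left.mpr h2

lemma small_lemma [IsFiniteMeasure lam]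
    (hna : ∀ A : Set Ω, MeasurableSet A → 0 < lam A →
      ∃ C, C ⊆ A ∧ MeasurableSet C ∧ 0 < lam C ∧ lam C < lam A)
    {A : Set Ω} (hA : MeasurableSet A) (h0 : 0 < lam A) {δ : ℝ≥0∞}
    (hδ0 : 0 < δ) (hδt : δ ≠ ⊤) :
    ∃ C, C ⊆ A ∧ MeasurableSet C ∧ 0 < lam C ∧ lam C ≤ δ := by
  have key : ∀ n : ℕ, ∃ C, C ⊆ A ∧ MeasurableSet C ∧ 0 < lam C ∧ lam C ≤ lam A / 2 ^ n := by
    intro n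
    induction n with
    | zero => exact ⟨A, subset_rfl, hA, h0, by simp⟩
    | succ n ih =>
      obtain ⟨C, hCA, hCm, hC0, hCle⟩ := ih
      obtain ⟨C', hC'C, hC'm, hC'0, hC'le⟩ := half_lemma lam hna hCm hC0
      refine ⟨C', hC'C.trans hCA, hC'm, hC'0, ?_⟩
      calc lam C' ≤ lam C / 2 := hC'le
      _ ≤ lam A / 2 ^ n / 2 := by gcongr
      _ = lam A / 2 ^ (n + 1) := by
          rw [pow_succ, div_eq_mul_inv, div_eq_mul_inv, div_eq_mul_inv, ENNReal.mul_inv (by simp) (by simp), mul_assoc]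
  -- pick n with lam A / 2 ^ n < δ
  have hAt : lam A ≠ ⊤ := measure_ne_top _ _
  obtain ⟨n, hn⟩ := ENNReal.exists_nat_gt (ENNReal.div_lt_top hAt hδ0.ne').ne
  have h2n : (n : ℝ≥0∞) ≤ 2 ^ n := by
    calc (n : ℝ≥0∞) ≤ ((2 ^ n : ℕ) : ℝ≥0∞) := by exact_mod_cast Nat.le_of_lt (Nat.lt_two_pow_self (n := n))
    _ = 2 ^ n := by push_cast; ring
  have hlt : lam A / δ < 2 ^ n := lt_of_lt_of_le hn h2n
  have hfin : lam A / 2 ^ n < δ := by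
    rw [ENNReal.div_lt_iff (Or.inl hδ0.ne') (Or.inl hδt)] at hlt
    rw [ENNReal.div_lt_iff (Or.inl (by positivity)) (Or.inl (by simp))]
    · rwa [mul_comm] at hlt
  obtain ⟨C, h1, h2, h3, h4⟩ := key n
  exact ⟨C, h1, h2, h3, h4.trans hfin.le⟩

lemma sierpinski_lemma [IsFiniteMeasure lam]
    (hna : ∀ A : Set Ω, MeasurableSet A → 0 < lam A →
      ∃ C, C ⊆ A ∧ MeasurableSet C ∧ 0 < lam C ∧ lam C < lam A)
    {A : Set Ω} (hA : MeasurableSet A) {r : ℝ≥0∞} (hr : r ≤ lam A) :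
    ∃ C, C ⊆ A ∧ MeasurableSet C ∧ lam C = r := by
  classical
  have hrt : r ≠ ⊤ := ne_top_of_le_ne_top (measure_ne_top _ _) hr
  -- step: from a good set, choose a near-maximal disjoint extension
  have step : ∀ C : Set Ω, C ⊆ A ∧ MeasurableSet C ∧ lam C ≤ r →
      ∃ D, (D ⊆ A \ C ∧ MeasurableSet D ∧ lam C + lam D ≤ r) ∧
        ∀ E, E ⊆ A \ C → MeasurableSet E → lam C + lam E ≤ r → lam E ≤ 2 * lam D := by
    intro C hC
    set S : Set ℝ≥0∞ := {m | ∃ E, (E ⊆ A \ C ∧ MeasurableSet E ∧ lam C + lam E ≤ r) ∧ lam E = m}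
      with hS
    have hSr : sSup S ≤ r := by
      apply sSup_le
      rintro m ⟨E, ⟨_, _, hE⟩, rfl⟩
      exact le_trans (le_add_self) hE
    by_cases hs : sSup S = 0
    · refine ⟨∅, ⟨Set.empty_subset _, MeasurableSet.empty, by simpa using hC.2.2⟩, ?_⟩
      intro E hE1 hE2 hE3
      have : lam E ≤ sSup S := le_sSup ⟨E, ⟨hE1, hE2, hE3⟩, rfl⟩
      simp [hs] at this
      simp [this]
    · have hst : sSup S ≠ ⊤ := ne_top_of_le_ne_top hrt hSr
      have h2 : sSup S / 2 < sSup S := ENNReal.half_lt_self hs hst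
      obtain ⟨m, hm, hmlt⟩ := lt_sSup_iff.mp h2
      obtain ⟨D, hD, rfl⟩ := hm
      refine ⟨D, hD, ?_⟩
      intro E hE1 hE2 hE3
      have h1 : lam E ≤ sSup S := le_sSup ⟨E, ⟨hE1, hE2, hE3⟩, rfl⟩
      calc lam E ≤ sSup S := h1
      _ = sSup S / 2 + sSup S / 2 := (ENNReal.add_halves _).symm
      _ ≤ lam D + lam D := by gcongr <;> exact hmlt.le
      _ = 2 * lam D := (two_mul _).symm
  -- iterate
  let T := {C : Set Ω // C ⊆ A ∧ MeasurableSet C ∧ lam C ≤ r}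
  let next : T → T := fun C =>
    ⟨C.1 ∪ (step C.1 C.2).choose, by
      obtain ⟨⟨hsub, hmeas, hle⟩, -⟩ := (step C.1 C.2).choose_spec
      refine ⟨Set.union_subset C.2.1 (hsub.trans Set.diff_subset), C.2.2.1.union hmeas, ?_⟩
      exact le_trans (measure_union_le _ _) hle⟩
  let seq : ℕ → T := fun n => next^[n] ⟨∅, Set.empty_subset _, MeasurableSet.empty, by simp⟩
  have hseq : ∀ n, seq (n + 1) = next (seq n) := fun n =>
    Function.iterate_succ_apply' next n _
  set D : ℕ → Set Ω := fun n => (step (seq n).1 (seq n).2).choose with hD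
  have hDspec : ∀ n, (D n ⊆ A \ (seq n).1 ∧ MeasurableSet (D n) ∧
      lam (seq n).1 + lam (D n) ≤ r) ∧
      ∀ E, E ⊆ A \ (seq n).1 → MeasurableSet E → lam (seq n).1 + lam E ≤ r →
        lam E ≤ 2 * lam (D n) := fun n => (step (seq n).1 (seq n).2).choose_spec
  have hsucc : ∀ n, (seq (n + 1)).1 = (seq n).1 ∪ D n := fun n => by rw [hseq n]
  have hmono : Monotone (fun n => (seq n).1) := by
    apply monotone_nat_of_le_succ
    intro n
    rw [hsucc n]
    exact Set.subset_union_left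
  have hmeasadd : ∀ n, lam (seq (n + 1)).1 = lam (seq n).1 + lam (D n) := by
    intro n
    rw [hsucc n]
    refine measure_union ?_ (hDspec n).1.2.1
    exact Set.disjoint_left.mpr fun t ht ht' => ((hDspec n).1.1 ht').2 ht
  set C : Set Ω := ⋃ n, (seq n).1 with hCdef
  have hCsub : C ⊆ A := Set.iUnion_subset fun n => (seq n).2.1
  have hCm : MeasurableSet C := MeasurableSet.iUnion fun n => (seq n).2.2.1
  have hCsup : lam C = ⨆ n, lam (seq n).1 :=
    Directed.measure_iUnion (Monotone.directed_le hmono)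
  have hCr : lam C ≤ r := by rw [hCsup]; exact iSup_le fun n => (seq n).2.2.2
  rcases eq_or_lt_of_le hCr with heq | hlt
  · exact ⟨C, hCsub, hCm, heq⟩
  exfalso
  -- get a small positive subset of A \ C
  have hACpos : 0 < lam (A \ C) := by
    by_contra hz
    push_neg at hz
    have hz0 : lam (A \ C) = 0 := le_antisymm hz zero_le
    have hA' : lam A ≤ lam C := by
      calc lam A = lam ((A \ C) ∪ C) := by rw [Set.diff_union_self,
        Set.union_eq_self_of_subset_right hCsub]
      _ ≤ lam (A \ C) + lam C := measure_union_le _ _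
      _ = lam C := by rw [hz0, zero_add]
    exact absurd (hr.trans hA') (not_le.mpr hlt)
  obtain ⟨E, hEsub, hEm, hE0, hEle⟩ := small_lemma lam hna (hA.diff hCm) hACpos
    (tsub_pos_of_lt hlt) (ne_top_of_le_ne_top hrt tsub_le_self)
  -- E fits over every seq n
  have hEfit : ∀ n, lam E ≤ 2 * lam (D n) := by
    intro n
    refine (hDspec n).2 E (hEsub.trans ?_) hEm ?_
    · exact Set.diff_subset_diff_right (Set.subset_iUnion (fun n => (seq n).1) n)
    · have h1 : lam (seq n).1 ≤ lam C := by
        rw [hCsup]; exact le_iSup (fun n => lam (seq n).1) n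
      calc lam (seq n).1 + lam E ≤ lam C + (r - lam C) := add_le_add h1 hEle
      _ = r := add_tsub_cancel_of_le hlt.le
  have hhalf : ∀ n, lam E / 2 ≤ lam (D n) := by
    intro n
    exact ENNReal.div_le_of_le_mul (by rw [mul_comm]; exact hEfit n)
  set c : ℝ≥0∞ := lam E / 2 with hc
  have hc0 : c ≠ 0 := by
    simp only [hc, ne_eq, ENNReal.div_eq_zero_iff]
    push_neg
    exact ⟨hE0.ne', by simp⟩
  have hct : c ≠ ⊤ := by
    refine ne_top_of_le_ne_top hrt ?_
    calc c ≤ lam E := ENNReal.half_le_self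
    _ ≤ r - lam C := hEle
    _ ≤ r := tsub_le_self
  have hgrow : ∀ n : ℕ, (n : ℝ≥0∞) * c ≤ lam (seq n).1 := by
    intro n
    induction n with
    | zero => simp
    | succ n ih =>
      rw [hmeasadd n]
      push_cast
      rw [add_mul, one_mul]
      exact add_le_add ih (hhalf n)
  obtain ⟨n, hn⟩ := ENNReal.exists_nat_gt (ENNReal.div_lt_top hrt hc0).ne
  have hrn : r < n * c := by
    rw [ENNReal.div_lt_iff (Or.inl hc0) (Or.inl hct)] at hn
    exact hn
  have : r < r := by
    calc r < (n : ℝ≥0∞) * c := hrn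
    _ ≤ lam (seq n).1 := hgrow n
    _ ≤ lam C := by rw [hCsup]; exact le_iSup (fun n => lam (seq n).1) n
    _ ≤ r := hCr
  exact lt_irrefl r this

lemma main_aux {Ω : Type*} [MeasurableSpace Ω]
    (nu lam : Measure Ω) [IsFiniteMeasure nu] [IsFiniteMeasure lam]
    (hna : ∀ A : Set Ω, MeasurableSet A → 0 < lam A →
      ∃ C, C ⊆ A ∧ MeasurableSet C ∧ 0 < lam C ∧ lam C < lam A)
    (B : Set Ω) (hB : MeasurableSet B)
    (b ε : ℝ) (hb : 0 < b) (hε : 0 < ε)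
    (h : ∀ C : Set Ω, C ⊆ B → MeasurableSet C →
      |(lam C).toReal - b * (nu C).toReal| ≤ ε * (nu B).toReal ^ (1 / 2 : ℝ))
    (x : Ω → ℝ) (hx : IsSignOn x B) (h0 : (∫ t, x t ∂nu) = 0)
    (hPN : lam (B ∩ x ⁻¹' {-1}) ≤ lam (B ∩ x ⁻¹' {1})) :
    ∃ xe : Ω → ℝ, Measurable xe ∧ (∀ t, xe t ∈ ({-1, 0, 1} : Set ℝ)) ∧
      Function.support xe ⊆ B ∧ IsSignOn xe (Function.support xe) ∧
      (∫ t, xe t ∂lam) = 0 ∧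
      b * (nu {t | xe t ≠ x t}).toReal ≤ 3 * ε * (nu B).toReal ^ (1 / 2 : ℝ) := by
  classical
  obtain ⟨hxm, hx2⟩ := hx
  set S : ℝ := (nu B).toReal ^ (1 / 2 : ℝ) with hSdef
  have hS : 0 ≤ S := Real.rpow_nonneg ENNReal.toReal_nonneg _
  set P : Set Ω := B ∩ x ⁻¹' {1} with hPdef
  set N : Set Ω := B ∩ x ⁻¹' {-1} with hNdef
  have hPm : MeasurableSet P := hB.inter (hxm (measurableSet_singleton 1))
  have hNm : MeasurableSet N := hB.inter (hxm (measurableSet_singleton (-1)))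
  have hxin : ∀ t ∈ B, x t = 1 ∨ x t = -1 := by
    intro t ht
    have h1 : x t ^ 2 = 1 := by rw [hx2 t, Set.indicator_of_mem ht]
    have h2 : (x t - 1) * (x t + 1) = 0 := by nlinarith
    rcases mul_eq_zero.mp h2 with h3 | h3
    · left; linarith
    · right; linarith
  have hxout : ∀ t, t ∉ B → x t = 0 := by
    intro t ht
    have h1 : x t ^ 2 = 0 := by rw [hx2 t, Set.indicator_of_notMem ht]
    exact pow_eq_zero_iff (by norm_num) |>.mp h1
  have hPNdisj : ∀ t, t ∈ P → t ∈ N → False := by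
    intro t ⟨_, h1⟩ ⟨_, h2⟩
    simp only [Set.mem_preimage, Set.mem_singleton_iff] at h1 h2
    rw [h1] at h2; norm_num at h2
  -- x as difference of indicators
  have hxeq : x = fun t => P.indicator (fun _ => (1:ℝ)) t - N.indicator (fun _ => (1:ℝ)) t := by
    funext t
    by_cases ht : t ∈ B
    · rcases hxin t ht with h1 | h1
      · have htP : t ∈ P := ⟨ht, by simp [h1]⟩
        have htN : t ∉ N := fun hN => hPNdisj t htP hN
        simp [Set.indicator_of_mem htP, Set.indicator_of_notMem htN, h1]
      · have htN : t ∈ N := ⟨ht, by simp [h1]⟩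
        have htP : t ∉ P := fun hP => hPNdisj t hP htN
        simp [Set.indicator_of_mem htN, Set.indicator_of_notMem htP, h1]
    · have htP : t ∉ P := fun hP => ht hP.1
      have htN : t ∉ N := fun hN => ht hN.1
      simp [Set.indicator_of_notMem htP, Set.indicator_of_notMem htN, hxout t ht]
  have hintP : Integrable (P.indicator (fun _ => (1:ℝ))) nu :=
    (integrable_const (1:ℝ)).indicator hPm
  have hintN : Integrable (N.indicator (fun _ => (1:ℝ))) nu :=
    (integrable_const (1:ℝ)).indicator hNm
  have hPNnu : (nu P).toReal = (nu N).toReal := by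
    have h1 : (∫ t, x t ∂nu) = (nu P).toReal - (nu N).toReal := by
      rw [hxeq]
      rw [integral_sub hintP hintN]
      rw [integral_indicator_const (1:ℝ) hPm, integral_indicator_const (1:ℝ) hNm]
      simp [measureReal_def]
    rw [h0] at h1
    linarith [h1]
  -- Sierpinski: find P' ⊆ P with lam P' = lam N
  obtain ⟨P', hP'P, hP'm, hP'eq⟩ := sierpinski_lemma lam hna hPm hPN
  set xe : Ω → ℝ := fun t => P'.indicator (fun _ => (1:ℝ)) t - N.indicator (fun _ => (1:ℝ)) t
    with hxedef
  have hxem : Measurable xe :=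
    ((measurable_const.indicator hP'm).sub (measurable_const.indicator hNm))
  have hv1 : ∀ t ∈ P', xe t = 1 := by
    intro t ht
    have htN : t ∉ N := fun hN => hPNdisj t (hP'P ht) hN
    simp [hxedef, Set.indicator_of_mem ht, Set.indicator_of_notMem htN]
  have hv2 : ∀ t ∈ N, xe t = -1 := by
    intro t ht
    have htP : t ∉ P' := fun hP => hPNdisj t (hP'P hP) ht
    simp [hxedef, Set.indicator_of_mem ht, Set.indicator_of_notMem htP]
  have hv3 : ∀ t, t ∉ P' → t ∉ N → xe t = 0 := by
    intro t h1 h2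
    simp [hxedef, Set.indicator_of_notMem h1, Set.indicator_of_notMem h2]
  have hmem : ∀ t, xe t ∈ ({-1, 0, 1} : Set ℝ) := by
    intro t
    by_cases h1 : t ∈ P'
    · simp [hv1 t h1]
    by_cases h2 : t ∈ N
    · simp [hv2 t h2]
    · simp [hv3 t h1 h2]
  have hsupp : Function.support xe ⊆ B := by
    intro t ht
    rw [Function.mem_support] at ht
    by_contra htB
    have h1 : t ∉ P' := fun hP => htB (hP'P hP).1
    have h2 : t ∉ N := fun hN => htB hN.1
    exact ht (hv3 t h1 h2)
  have hsign : IsSignOn xe (Function.support xe) := by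
    refine ⟨hxem, fun t => ?_⟩
    rcases hmem t with h1 | h1 | h1 <;> simp only [Set.mem_singleton_iff] at * 
    · have : xe t ≠ 0 := by rw [h1]; norm_num
      rw [Set.indicator_of_mem (Function.mem_support.mpr this), h1]; norm_num
    · rw [Set.indicator_of_notMem (by simpa [Function.mem_support] using h1), h1]
      norm_num
    · have : xe t ≠ 0 := by rw [h1]; norm_num
      rw [Set.indicator_of_mem (Function.mem_support.mpr this), h1]; norm_num
  have hint0 : (∫ t, xe t ∂lam) = 0 := by
    rw [hxedef]
    rw [integral_sub ((integrable_const (1:ℝ)).indicator hP'm)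
      ((integrable_const (1:ℝ)).indicator hNm)]
    rw [integral_indicator_const (1:ℝ) hP'm, integral_indicator_const (1:ℝ) hNm, measureReal_def, measureReal_def, hP'eq]
    simp
  -- the difference set
  have hdiffsub : {t | xe t ≠ x t} ⊆ P \ P' := by
    intro t ht
    simp only [Set.mem_setOf_eq] at ht
    by_cases h1 : t ∈ P'
    · exact absurd (by rw [hv1 t h1, ((hP'P h1).2 : x t = 1)]) ht
    by_cases h2 : t ∈ N
    · exact absurd (by rw [hv2 t h2, (h2.2 : x t = -1)]) ht
    have hxe0 : xe t = 0 := hv3 t h1 h2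
    by_cases htB : t ∈ B
    · rcases hxin t htB with h3 | h3
      · exact ⟨⟨htB, by simp [h3]⟩, h1⟩
      · exact absurd (⟨htB, by simp [h3]⟩ : t ∈ N) h2
    · exact absurd (by rw [hxe0, hxout t htB]) ht
  -- measure estimates
  have hd : lam (P \ P') = lam P - lam P' := measure_diff hP'P hP'm.nullMeasurableSet
    (measure_ne_top _ _)
  have hdiffReal : (lam (P \ P')).toReal = (lam P).toReal - (lam N).toReal := by
    rw [hd, hP'eq, ENNReal.toReal_sub_of_le hPN (measure_ne_top _ _)]
  have h1 := h (P \ P') ((Set.diff_subset).trans Set.inter_subset_left) (hPm.diff hP'm)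
  have h2 := h P Set.inter_subset_left hPm
  have h3 := h N Set.inter_subset_left hNm
  rw [abs_le] at h1 h2 h3
  have hmono : b * (nu {t | xe t ≠ x t}).toReal ≤ b * (nu (P \ P')).toReal := by
    have := ENNReal.toReal_mono (measure_ne_top nu _) (measure_mono (μ := nu) hdiffsub)
    nlinarith
  refine ⟨xe, hxem, hmem, hsupp, hsign, hint0, ?_⟩
  calc b * (nu {t | xe t ≠ x t}).toReal ≤ b * (nu (P \ P')).toReal := hmono
  _ ≤ (lam (P \ P')).toReal + ε * S := by linarith [h1.1]
  _ = (lam P).toReal - (lam N).toReal + ε * S := by rw [hdiffReal]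
  _ ≤ 3 * ε * S := by
      have e2 := h2.2; have e3 := h3.1
      rw [hPNnu] at e2
      linarith

end Aux

/-- If `λ` is finite and non-atomic, `ν B > 0`, `b > 0`, `ε > 0`, and
`|λ C - b·ν C| ≤ ε·(ν B)^(1/2)` for every measurable `C ⊆ B`, then every mean zero
(w.r.t. `ν`) sign `x` on `B` admits a mean zero (w.r.t. `λ`) sign `x_ε` supported in `B`
with `b·ν {x_ε ≠ x} ≤ 3ε·(ν B)^(1/2)`. -/
theorem exists_meanZero_sign_close_of_density_approx {Ω : Type*} [MeasurableSpace Ω]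
    (nu lam : Measure Ω) [IsFiniteMeasure nu] [IsFiniteMeasure lam]
    (hna : ∀ A : Set Ω, MeasurableSet A → 0 < lam A →
      ∃ C, C ⊆ A ∧ MeasurableSet C ∧ 0 < lam C ∧ lam C < lam A)
    (B : Set Ω) (hB : MeasurableSet B) (hBpos : 0 < nu B)
    (b ε : ℝ) (hb : 0 < b) (hε : 0 < ε)
    (h : ∀ C : Set Ω, C ⊆ B → MeasurableSet C →
      |(lam C).toReal - b * (nu C).toReal| ≤ ε * (nu B).toReal ^ (1 / 2 : ℝ)) :
    ∀ x : Ω → ℝ, IsSignOn x B → (∫ t, x t ∂nu) = 0 →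
      ∃ xe : Ω → ℝ, Measurable xe ∧ (∀ t, xe t ∈ ({-1, 0, 1} : Set ℝ)) ∧
        Function.support xe ⊆ B ∧ IsSignOn xe (Function.support xe) ∧
        (∫ t, xe t ∂lam) = 0 ∧
        b * (nu {t | xe t ≠ x t}).toReal ≤ 3 * ε * (nu B).toReal ^ (1 / 2 : ℝ) := by
  intro x hx hx0
  by_cases hc : lam (B ∩ x ⁻¹' {-1}) ≤ lam (B ∩ x ⁻¹' {1})
  · exact main_aux nu lam hna B hB b ε hb hε h x hx hx0 hc
  · push_neg at hc
    have hneg : IsSignOn (-x) B := ⟨hx.1.neg, fun t => by simpa [neg_sq] using hx.2 t⟩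
    have hneg0 : (∫ t, (-x) t ∂nu) = 0 := by
      simp only [Pi.neg_apply, integral_neg, hx0, neg_zero]
    have hsets1 : B ∩ (-x) ⁻¹' {-1} = B ∩ x ⁻¹' {1} := by
      ext t
      simp only [Set.mem_inter_iff, Set.mem_preimage, Pi.neg_apply, Set.mem_singleton_iff,
        neg_eq_iff_eq_neg, neg_neg]
    have hsets2 : B ∩ (-x) ⁻¹' {1} = B ∩ x ⁻¹' {-1} := by
      ext t
      simp only [Set.mem_inter_iff, Set.mem_preimage, Pi.neg_apply, Set.mem_singleton_iff,
        neg_eq_iff_eq_neg]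
    have hPN : lam (B ∩ (-x) ⁻¹' {-1}) ≤ lam (B ∩ (-x) ⁻¹' {1}) := by
      rw [hsets1, hsets2]; exact hc.le
    obtain ⟨xe, hm, hmem, hsupp, hsign, hint, hest⟩ :=
      main_aux nu lam hna B hB b ε hb hε h (-x) hneg hneg0 hPN
    have hsup_eq : Function.support (-xe) = Function.support xe := by
      ext t; simp [Function.mem_support]
    refine ⟨-xe, hm.neg, ?_, ?_, ?_, ?_, ?_⟩
    · intro t
      rcases hmem t with h1 | h1 | h1 <;> simp_all <;> simp [h1]
    · rw [hsup_eq]; exact hsupp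
    · refine ⟨hm.neg, fun t => ?_⟩
      rw [hsup_eq]
      simpa [Pi.neg_apply, neg_sq] using hsign.2 t
    · simp only [Pi.neg_apply, integral_neg, hint, neg_zero]
    · have hset : {t | (-xe) t ≠ x t} = {t | xe t ≠ (-x) t} := by
        ext t
        simp only [Set.mem_setOf_eq, Pi.neg_apply, ne_eq, neg_eq_iff_eq_neg]
      rw [hset]
      exact hest
end

section
/- Let 1 ≤ q < ∞, let (Ω,Σ,ν) be a finite measure space, let λ be a finite non-atomic nonnegative measure on (Ω,Σ), let X be a normed space, and let S : L_q(Ω,ν) → X be a bounded linear operator. Let B ∈ Σ with ν(B) > 0, and let b > 0, δ > 0. Assume: (i) ‖S f‖ ≥ δ·λ(supp f) for every f ∈ L_∞(Ω) ⊆ L_q(Ω,ν) that is a sign on some measurable subset of B and is mean zero with respect to λ; (ii) |λ(C) − b·ν(C)| ≤ ε·ν(B)^{1/2} for every measurable C ⊆ B. Then there exists ε₀ > 0, depending only on δ, b, q, ν(B) and ‖S‖, such that if ε ≤ ε₀, then every sign x on B that is mean zero with respect to ν satisfies ‖S x‖ ≥ (1/2)·δ·b·ν(B) > 0. -/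
open MeasureTheory ENNReal

section Auxiliary

variable {Ω : Type*} [MeasurableSpace Ω]


lemma my_halve (lam : Measure Ω)
    (hna : ∀ A : Set Ω, MeasurableSet A → 0 < lam A →
      ∃ C, C ⊆ A ∧ MeasurableSet C ∧ 0 < lam C ∧ lam C < lam A)
    {A : Set Ω} (hA : MeasurableSet A) (hApos : 0 < lam A) (hAfin : lam A ≠ ⊤) :
    ∃ C, C ⊆ A ∧ MeasurableSet C ∧ 0 < lam C ∧ lam C ≤ lam A / 2 := by
  obtain ⟨C, hCA, hCm, hCpos, hClt⟩ := hna A hA hApos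
  rcases le_or_gt (lam C) (lam A / 2) with h | h
  · exact ⟨C, hCA, hCm, hCpos, h⟩
  · have hdiff : lam (A \ C) = lam A - lam C :=
      measure_diff hCA hCm.nullMeasurableSet (hClt.trans_le le_top).ne
    refine ⟨A \ C, Set.diff_subset, hA.diff hCm, ?_, ?_⟩
    · rw [hdiff]; exact tsub_pos_iff_lt.mpr hClt
    · rw [hdiff]
      rw [tsub_le_iff_right]
      calc lam A = lam A / 2 + lam A / 2 := (ENNReal.add_halves _).symm
        _ ≤ lam A / 2 + lam C := add_le_add_right h.le _

lemma my_small (lam : Measure Ω)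
    (hna : ∀ A : Set Ω, MeasurableSet A → 0 < lam A →
      ∃ C, C ⊆ A ∧ MeasurableSet C ∧ 0 < lam C ∧ lam C < lam A)
    {A : Set Ω} (hA : MeasurableSet A) (hApos : 0 < lam A) (hAfin : lam A ≠ ⊤)
    {c : ℝ≥0∞} (hc : 0 < c) :
    ∃ C, C ⊆ A ∧ MeasurableSet C ∧ 0 < lam C ∧ lam C ≤ c := by
  have key : ∀ n : ℕ, ∃ C, C ⊆ A ∧ MeasurableSet C ∧ 0 < lam C ∧ lam C ≤ lam A * 2⁻¹ ^ n := by
    intro n; induction n with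
    | zero => exact ⟨A, subset_rfl, hA, hApos, by simp⟩
    | succ n ih =>
      obtain ⟨C, hCA, hCm, hCpos, hCle⟩ := ih
      obtain ⟨C', hC'C, hC'm, hC'pos, hC'le⟩ := my_halve lam hna hCm hCpos
        (fun h => hAfin (by simpa [h, hAfin, ENNReal.mul_eq_top] using hCle))
      refine ⟨C', hC'C.trans hCA, hC'm, hC'pos, ?_⟩
      calc lam C' ≤ lam C / 2 := hC'le
        _ ≤ lam A * 2⁻¹ ^ n / 2 := by gcongr
        _ = lam A * 2⁻¹ ^ (n + 1) := by
            rw [pow_succ, ENNReal.div_eq_inv_mul]; ring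
  obtain ⟨n, hn⟩ := ENNReal.exists_inv_two_pow_lt
    (show c / lam A ≠ 0 from (ENNReal.div_pos hc.ne' hAfin).ne')
  obtain ⟨C, hCA, hCm, hCpos, hCle⟩ := key n
  refine ⟨C, hCA, hCm, hCpos, hCle.trans ?_⟩
  calc lam A * 2⁻¹ ^ n ≤ lam A * (c / lam A) := by exact mul_le_mul_right hn.le _
    _ = c := ENNReal.mul_div_cancel hApos.ne' hAfin

lemma my_sierpinski (lam : Measure Ω)
    (hna : ∀ A : Set Ω, MeasurableSet A → 0 < lam A →
      ∃ C, C ⊆ A ∧ MeasurableSet C ∧ 0 < lam C ∧ lam C < lam A)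
    {A : Set Ω} (hA : MeasurableSet A) (hAfin : lam A ≠ ⊤)
    {r : ℝ≥0∞} (hr : r ≤ lam A) :
    ∃ D, D ⊆ A ∧ MeasurableSet D ∧ lam D = r := by
  -- the type of "admissible" sets
  let α := {D : Set Ω // D ⊆ A ∧ MeasurableSet D ∧ lam D ≤ r}
  let s : α → ℝ≥0∞ := fun D => ⨆ (E : α) (_ : D.1 ⊆ E.1), lam E.1
  have hs_le : ∀ D : α, s D ≤ r := fun D =>
    iSup_le fun E => iSup_le fun _ => E.2.2.2
  have key : ∀ (D : α) (n : ℕ), ∃ E : α, D.1 ⊆ E.1 ∧ s D ≤ lam E.1 + ((n : ℝ≥0∞) + 1)⁻¹ := by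
    intro D n
    rcases eq_or_ne (s D) 0 with h0 | h0
    · exact ⟨D, subset_rfl, by simp [h0]⟩
    · have hlt : s D - ((n : ℝ≥0∞) + 1)⁻¹ < s D :=
        ENNReal.sub_lt_self ((hs_le D).trans_lt (hr.trans_lt hAfin.lt_top)).ne h0 (by simp)
      rw [lt_iSup_iff] at hlt
      obtain ⟨E, hE⟩ := hlt
      rw [lt_iSup_iff] at hE
      obtain ⟨hDE, hE⟩ := hE
      exact ⟨E, hDE, tsub_le_iff_right.mp hE.le⟩
  let f : ℕ → α := fun n => Nat.rec ⟨∅, Set.empty_subset A, MeasurableSet.empty, by simp⟩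
    (fun n D => Classical.choose (key D n)) n
  have hf_succ : ∀ n, f (n + 1) = Classical.choose (key (f n) n) := fun n => rfl
  have hf_mono : ∀ n, (f n).1 ⊆ (f (n + 1)).1 := by
    intro n; rw [hf_succ]; exact (Classical.choose_spec (key (f n) n)).1
  have hf_s : ∀ n, s (f n) ≤ lam (f (n + 1)).1 + ((n : ℝ≥0∞) + 1)⁻¹ := by
    intro n; rw [hf_succ]; exact (Classical.choose_spec (key (f n) n)).2
  set Dinf : Set Ω := ⋃ n, (f n).1 with hDinf
  have hmono : Monotone fun n => (f n).1 := monotone_nat_of_le_succ hf_mono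
  have hDA : Dinf ⊆ A := Set.iUnion_subset fun n => (f n).2.1
  have hDm : MeasurableSet Dinf := MeasurableSet.iUnion fun n => (f n).2.2.1
  have hDval : lam Dinf = ⨆ n, lam (f n).1 := (hmono.directed_le).measure_iUnion
  have hDle : lam Dinf ≤ r := by
    rw [hDval]; exact iSup_le fun n => (f n).2.2.2
  refine ⟨Dinf, hDA, hDm, ?_⟩
  by_contra hne
  have hDlt : lam Dinf < r := lt_of_le_of_ne hDle hne
  -- A \ Dinf has positive measure
  have hpos : 0 < lam (A \ Dinf) := by
    by_contra h
    push_neg at h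
    have h0 : lam (A \ Dinf) = 0 := le_antisymm h zero_le
    have : lam A ≤ lam Dinf + lam (A \ Dinf) :=
      calc lam A ≤ lam (Dinf ∪ (A \ Dinf)) :=
            measure_mono (by intro t ht; by_cases h : t ∈ Dinf <;> simp [h, ht])
        _ ≤ lam Dinf + lam (A \ Dinf) := measure_union_le _ _
    rw [h0, add_zero] at this
    exact absurd (hr.trans this) hDlt.not_ge
  obtain ⟨C, hCA, hCm, hCpos, hCle⟩ := my_small lam hna (hA.diff hDm) hpos
    (fun h => hAfin (top_le_iff.mp (h ▸ measure_mono Set.diff_subset : (⊤:ℝ≥0∞) ≤ lam A)))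
    (tsub_pos_iff_lt.mpr hDlt)
  have hCdisj : Disjoint Dinf C := Set.disjoint_left.mpr fun t ht ht' =>
    (hCA ht').2 ht
  have hunion : lam (Dinf ∪ C) = lam Dinf + lam C := measure_union hCdisj hCm
  have hEadm : lam (Dinf ∪ C) ≤ r := by
    rw [hunion]
    calc lam Dinf + lam C ≤ lam Dinf + (r - lam Dinf) := add_le_add_right hCle _
      _ = r := add_tsub_cancel_of_le hDle
  -- contradiction: lam C ≤ 1/(n+1) for all n
  have hcontr : ∀ n : ℕ, lam C ≤ ((n : ℝ≥0∞) + 1)⁻¹ := by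
    intro n
    have hEα : (Dinf ∪ C) ⊆ A := Set.union_subset hDA (hCA.trans Set.diff_subset)
    have hsub : (f n).1 ⊆ Dinf ∪ C := (Set.subset_iUnion (fun n => (f n).1) n).trans
      Set.subset_union_left
    have hsn : lam Dinf + lam C ≤ s (f n) := by
      rw [← hunion]
      exact le_iSup_of_le ⟨Dinf ∪ C, hEα, hDm.union hCm, hEadm⟩ (le_iSup_of_le hsub le_rfl)
    have h2 : lam Dinf + lam C ≤ lam Dinf + ((n : ℝ≥0∞) + 1)⁻¹ := by
      refine (hsn.trans (hf_s n)).trans (add_le_add_left ?_ _)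
      rw [hDval]; exact le_iSup (fun n => lam (f n).1) (n + 1)
    exact (ENNReal.add_le_add_iff_left (hDle.trans_lt (hr.trans_lt hAfin.lt_top)).ne).mp h2
  obtain ⟨m, hm⟩ := ENNReal.exists_inv_nat_lt hCpos.ne'
  have : lam C ≤ ((m : ℝ≥0∞))⁻¹ := (hcontr m).trans (by
    apply ENNReal.inv_le_inv.mpr; exact le_self_add)
  exact absurd (hm.trans_le this) (lt_irrefl _)

set_option maxHeartbeats 1000000 in
lemma my_aux
    (q : ℝ≥0∞) [Fact (1 ≤ q)] (hq2 : q ≠ ⊤)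
    (nu lam : Measure Ω) [IsFiniteMeasure nu] [IsFiniteMeasure lam]
    (hna : ∀ A : Set Ω, MeasurableSet A → 0 < lam A →
      ∃ C, C ⊆ A ∧ MeasurableSet C ∧ 0 < lam C ∧ lam C < lam A)
    {X : Type*} [NormedAddCommGroup X] [NormedSpace ℝ X]
    (S : Lp ℝ q nu →L[ℝ] X)
    (B : Set Ω) (hB : MeasurableSet B) (hBpos : 0 < nu B)
    (b δ : ℝ) (hb : 0 < b) (hδ : 0 < δ)
    (hS : ∀ (f : Ω → ℝ) (A : Set Ω), MeasurableSet A → A ⊆ B → IsSignOn f A →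
      (∫ t, f t ∂lam) = 0 → ∀ hf : MemLp f q nu,
        δ * (lam (Function.support f)).toReal ≤ ‖S (hf.toLp f)‖)
    (ε : ℝ) (hε : 0 < ε)
    (hεs : ε * (nu B).toReal ^ (1 / 2 : ℝ) ≤ b * (nu B).toReal / 4)
    (hε2 : 2 * (ε * (nu B).toReal ^ (1 / 2 : ℝ)) / b ≤
      (δ * b * (nu B).toReal / (8 * (‖S‖ + 1))) ^ q.toReal)
    (hC : ∀ C : Set Ω, C ⊆ B → MeasurableSet C →
        |(lam C).toReal - b * (nu C).toReal| ≤ ε * (nu B).toReal ^ (1 / 2 : ℝ))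
    (x : Ω → ℝ) (hsign : IsSignOn x B) (hxν : (∫ t, x t ∂nu) = 0) (hx : MemLp x q nu)
    (hxlam : 0 ≤ ∫ t, x t ∂lam) :
    (1 / 2) * δ * b * (nu B).toReal ≤ ‖S (hx.toLp x)‖ := by
  obtain ⟨hxm, hx2⟩ := hsign
  set V : ℝ := (nu B).toReal with hV
  set se : ℝ := ε * V ^ (1 / 2 : ℝ) with hse
  set qr : ℝ := q.toReal with hqr
  set M : ℝ := ‖S‖ + 1 with hM
  have hVpos : 0 < V := ENNReal.toReal_pos hBpos.ne' (measure_ne_top nu B)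
  have hq0 : q ≠ 0 := (lt_of_lt_of_le zero_lt_one Fact.out).ne'
  have hqr1 : (1 : ℝ) ≤ qr := by
    rw [hqr, show (1:ℝ) = (1 : ℝ≥0∞).toReal by simp]
    exact ENNReal.toReal_mono hq2 Fact.out
  have hqrpos : 0 < qr := lt_of_lt_of_le zero_lt_one hqr1
  have hMpos : 0 < M := by positivity
  have hsepos : 0 < se := by
    apply mul_pos hε
    exact Real.rpow_pos_of_pos hVpos _
  -- pointwise structure of x
  have hval : ∀ t ∈ B, x t = 1 ∨ x t = -1 := by
    intro t ht
    have h := hx2 t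
    rw [Set.indicator_of_mem ht] at h
    exact mul_self_eq_one_iff.mp (by rw [← pow_two]; exact h)
  have hzero : ∀ t ∉ B, x t = 0 := by
    intro t ht
    have h := hx2 t
    rw [Set.indicator_of_notMem ht] at h
    exact (pow_eq_zero_iff two_ne_zero).mp h
  set P : Set Ω := B ∩ x ⁻¹' {1} with hP
  set N : Set Ω := B ∩ x ⁻¹' {-1} with hN
  have hPm : MeasurableSet P := hB.inter (hxm (measurableSet_singleton 1))
  have hNm : MeasurableSet N := hB.inter (hxm (measurableSet_singleton (-1)))
  have hPB : P ⊆ B := Set.inter_subset_left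
  have hNB : N ⊆ B := Set.inter_subset_left
  have hPN : P ∪ N = B := by
    apply Set.Subset.antisymm (Set.union_subset hPB hNB)
    intro t ht
    rcases hval t ht with h1 | h1
    · exact Or.inl ⟨ht, h1⟩
    · exact Or.inr ⟨ht, h1⟩
  have hdisj : Disjoint P N := by
    rw [Set.disjoint_left]
    rintro t ⟨-, h1⟩ ⟨-, h2⟩
    have e1 : x t = 1 := h1
    have e2 : x t = -1 := h2
    linarith [e1 ▸ e2]
  have hxpt : ∀ t, x t = P.indicator (fun _ => (1:ℝ)) t - N.indicator (fun _ => (1:ℝ)) t := by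
    intro t
    by_cases ht : t ∈ B
    · rcases hval t ht with h1 | h1
      · have htP : t ∈ P := ⟨ht, h1⟩
        have htN : t ∉ N := by
          rintro ⟨-, h2⟩
          have h2' : x t = -1 := h2
          rw [h1] at h2'; norm_num at h2'
        rw [Set.indicator_of_mem htP, Set.indicator_of_notMem htN, h1]; ring
      · have htN : t ∈ N := ⟨ht, h1⟩
        have htP : t ∉ P := by
          rintro ⟨-, h2⟩
          have h2' : x t = 1 := h2
          rw [h1] at h2'; norm_num at h2'
        rw [Set.indicator_of_mem htN, Set.indicator_of_notMem htP, h1]; ring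
    · have h0 := hzero t ht
      have hP' : t ∉ P := fun h => ht h.1
      have hN' : t ∉ N := fun h => ht h.1
      simp [Set.indicator_of_notMem hP', Set.indicator_of_notMem hN', h0]
  -- integrals
  have iP : Integrable (P.indicator fun _ => (1:ℝ)) nu := (integrable_const 1).indicator hPm
  have iN : Integrable (N.indicator fun _ => (1:ℝ)) nu := (integrable_const 1).indicator hNm
  have iPl : Integrable (P.indicator fun _ => (1:ℝ)) lam := (integrable_const 1).indicator hPm
  have iNl : Integrable (N.indicator fun _ => (1:ℝ)) lam := (integrable_const 1).indicator hNm
  have hint : ∀ (mu : Measure Ω), IsFiniteMeasure mu → (∫ t, x t ∂mu) =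
      (mu P).toReal - (mu N).toReal := by
    intro mu hmu
    rw [integral_congr_ae (Filter.Eventually.of_forall hxpt)]
    rw [integral_sub ((integrable_const 1).indicator hPm) ((integrable_const 1).indicator hNm),
      integral_indicator_const (1:ℝ) hPm, integral_indicator_const (1:ℝ) hNm]
    simp
    rfl
  have hnuPN : (nu P).toReal = (nu N).toReal := by
    have := hint nu inferInstance
    rw [hxν] at this
    linarith
  have hintl : (∫ t, x t ∂lam) = (lam P).toReal - (lam N).toReal := hint lam inferInstance
  have hIgap : (∫ t, x t ∂lam) ≤ 2 * se := by
    have h1 := hC P hPB hPm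
    have h2 := hC N hNB hNm
    rw [abs_le] at h1 h2
    rw [hintl]
    have hb' : b * (nu P).toReal = b * (nu N).toReal := by rw [hnuPN]
    linarith [h1.2, h2.1]
  -- choose D
  have hIle : (∫ t, x t ∂lam) / 2 ≤ (lam P).toReal := by
    have h0 : 0 ≤ (lam N).toReal := ENNReal.toReal_nonneg
    rw [hintl] at hxlam ⊢
    linarith
  obtain ⟨D, hDP, hDm, hDr⟩ := my_sierpinski lam hna hPm (measure_ne_top lam P)
    (show ENNReal.ofReal ((∫ t, x t ∂lam) / 2) ≤ lam P from ENNReal.ofReal_le_of_le_toReal hIle)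
  have hDval : (lam D).toReal = (∫ t, x t ∂lam) / 2 := by
    rw [hDr, ENNReal.toReal_ofReal (by linarith)]
  have hDB : D ⊆ B := hDP.trans hPB
  have hDx : ∀ t ∈ D, x t = 1 := fun t ht => (hDP ht).2
  -- the corrected sign y
  set y : Ω → ℝ := fun t => x t - 2 * D.indicator (fun _ => (1:ℝ)) t with hy
  have hym : Measurable y :=
    hxm.sub ((measurable_const.indicator hDm).const_mul 2)
  have hy2 : ∀ t, (y t) ^ 2 = B.indicator (fun _ => (1 : ℝ)) t := by
    intro t
    by_cases ht : t ∈ D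
    · rw [hy]
      simp only [Set.indicator_of_mem ht, hDx t ht]
      rw [Set.indicator_of_mem (hDB ht)]
      norm_num
    · rw [hy]
      simp only [Set.indicator_of_notMem ht]
      rw [mul_zero, sub_zero]
      exact hx2 t
  have hysign : IsSignOn y B := ⟨hym, hy2⟩
  have hysupp : Function.support y = B := by
    ext t
    rw [Function.mem_support]
    constructor
    · intro h
      by_contra htB
      have h2 := hy2 t
      rw [Set.indicator_of_notMem htB] at h2
      exact h ((pow_eq_zero_iff two_ne_zero).mp h2)
    · intro htB h0
      have h2 := hy2 t
      rw [Set.indicator_of_mem htB, h0] at h2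
      norm_num at h2
  have hyintl : (∫ t, y t ∂lam) = 0 := by
    have iD : Integrable (fun t => 2 * D.indicator (fun _ => (1:ℝ)) t) lam :=
      ((integrable_const (1:ℝ)).indicator hDm).const_mul 2
    have ix : Integrable x lam := by
      refine (iPl.sub iNl).congr (Filter.Eventually.of_forall fun t => (hxpt t).symm)
    rw [hy]
    rw [integral_sub ix iD, integral_const_mul, integral_indicator_const (1:ℝ) hDm]
    simp only [smul_eq_mul, mul_one]
    change ∫ a, x a ∂lam - 2 * (lam D).toReal = 0
    rw [hDval]
    ring
  have hymem : MemLp y q nu := by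
    refine MemLp.of_bound hym.aestronglyMeasurable 1 (Filter.Eventually.of_forall fun t => ?_)
    rw [Real.norm_eq_abs]
    rw [← sq_le_one_iff_abs_le_one, hy2 t]
    by_cases ht : t ∈ B <;> simp [ht]
  -- apply hS
  have hSy : δ * (lam B).toReal ≤ ‖S (hymem.toLp y)‖ := by
    have := hS y B hB subset_rfl hysign hyintl hymem
    rwa [hysupp] at this
  -- norm of the difference
  have hdiff_fun : x - y = D.indicator (fun _ => (2:ℝ)) := by
    funext t
    by_cases ht : t ∈ D <;>
      simp [hy, Pi.sub_apply, Set.indicator_apply, ht]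
  have hdiffnorm : ‖hx.toLp x - hymem.toLp y‖ = 2 * (nu D).toReal ^ (1 / qr) := by
    rw [← MemLp.toLp_sub hx hymem, Lp.norm_toLp]
    rw [eLpNorm_congr_ae (Filter.Eventually.of_forall fun t => congrFun hdiff_fun t)]
    rw [eLpNorm_indicator_const hDm hq0 hq2]
    rw [ENNReal.toReal_mul, ← ENNReal.toReal_rpow]
    norm_num
    rfl
  -- quantitative bounds
  have hlamB : b * V - se ≤ (lam B).toReal := by
    have := hC B subset_rfl hB
    rw [abs_le] at this
    linarith [this.1]
  have hDnu : (nu D).toReal ≤ 2 * se / b := by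
    have h := hC D hDB hDm
    rw [abs_le] at h
    have : b * (nu D).toReal ≤ 2 * se := by
      have := h.1
      rw [hDval] at this
      linarith
    rw [div_eq_inv_mul, ← mul_le_mul_iff_right₀ hb, ← mul_assoc, mul_inv_cancel₀ hb.ne', one_mul]
    exact this
  set T : ℝ := δ * b * V / (8 * M) with hT
  have hTpos : 0 < T := by positivity
  have hwT : (nu D).toReal ^ (1 / qr) ≤ T := by
    calc (nu D).toReal ^ (1 / qr) ≤ (2 * se / b) ^ (1 / qr) :=
          Real.rpow_le_rpow ENNReal.toReal_nonneg hDnu (by positivity)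
      _ ≤ (T ^ qr) ^ (1 / qr) := by
          apply Real.rpow_le_rpow (by positivity) ?_ (by positivity)
          calc 2 * se / b = 2 * (ε * V ^ (1/2:ℝ)) / b := by rw [hse]
            _ ≤ T ^ qr := hε2
      _ = T := by
          rw [← Real.rpow_mul hTpos.le]
          rw [mul_one_div_cancel hqrpos.ne', Real.rpow_one]
  set w : ℝ := (nu D).toReal ^ (1 / qr) with hw
  have hwnn : 0 ≤ w := Real.rpow_nonneg ENNReal.toReal_nonneg _
  have hnormdiff : ‖S (hx.toLp x - hymem.toLp y)‖ ≤ M * (2 * w) := by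
    calc ‖S (hx.toLp x - hymem.toLp y)‖ ≤ ‖S‖ * ‖hx.toLp x - hymem.toLp y‖ :=
          S.le_opNorm _
      _ = ‖S‖ * (2 * w) := by rw [hdiffnorm]
      _ ≤ M * (2 * w) := by
          apply mul_le_mul_of_nonneg_right _ (by positivity)
          rw [hM]; linarith
  have htri : ‖S (hymem.toLp y)‖ ≤ ‖S (hx.toLp x)‖ + ‖S (hx.toLp x - hymem.toLp y)‖ := by
    have : S (hymem.toLp y) = S (hx.toLp x) - S (hx.toLp x - hymem.toLp y) := by
      rw [← map_sub]; congr 1; abel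
    rw [this]
    exact norm_sub_le _ _
  -- final arithmetic
  have hA5 : δ * (b * V - se) ≤ δ * (lam B).toReal :=
    mul_le_mul_of_nonneg_left hlamB hδ.le
  have hA6 : δ * se ≤ δ * (b * V / 4) := by
    apply mul_le_mul_of_nonneg_left _ hδ.le
    rw [hse]; linarith [hεs]
  have hA4 : M * (2 * w) ≤ M * (2 * T) :=
    mul_le_mul_of_nonneg_left (by linarith) hMpos.le
  have hA7 : M * (2 * T) = δ * b * V / 4 := by
    rw [hT]; field_simp; ring
  nlinarith [hSy, htri, hnormdiff]

end Auxiliary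


/-- Suppose `S : L_q(ν) → X` is a bounded operator satisfying `‖S f‖ ≥ δ·λ(supp f)` for all
mean zero (w.r.t. `λ`) signs `f` on measurable subsets of `B`. Then there is `ε₀ > 0` such
that whenever `0 < ε ≤ ε₀` and `|λ C - b·ν C| ≤ ε·(ν B)^(1/2)` for all measurable `C ⊆ B`,
every mean zero (w.r.t. `ν`) sign `x` on `B` satisfies `‖S x‖ ≥ (1/2)·δ·b·ν B > 0`. -/
theorem norm_apply_sign_ge {Ω : Type*} [MeasurableSpace Ω]
    (q : ℝ≥0∞) [Fact (1 ≤ q)] (hq2 : q ≠ ⊤)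
    (nu lam : Measure Ω) [IsFiniteMeasure nu] [IsFiniteMeasure lam]
    (hna : ∀ A : Set Ω, MeasurableSet A → 0 < lam A →
      ∃ C, C ⊆ A ∧ MeasurableSet C ∧ 0 < lam C ∧ lam C < lam A)
    {X : Type*} [NormedAddCommGroup X] [NormedSpace ℝ X]
    (S : Lp ℝ q nu →L[ℝ] X)
    (B : Set Ω) (hB : MeasurableSet B) (hBpos : 0 < nu B)
    (b δ : ℝ) (hb : 0 < b) (hδ : 0 < δ)
    (hS : ∀ (f : Ω → ℝ) (A : Set Ω), MeasurableSet A → A ⊆ B → IsSignOn f A →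
      (∫ t, f t ∂lam) = 0 → ∀ hf : MemLp f q nu,
        δ * (lam (Function.support f)).toReal ≤ ‖S (hf.toLp f)‖) :
    ∃ ε₀ > (0 : ℝ), ∀ ε : ℝ, 0 < ε → ε ≤ ε₀ →
      (∀ C : Set Ω, C ⊆ B → MeasurableSet C →
        |(lam C).toReal - b * (nu C).toReal| ≤ ε * (nu B).toReal ^ (1 / 2 : ℝ)) →
      ∀ x : Ω → ℝ, IsSignOn x B → (∫ t, x t ∂nu) = 0 → ∀ hx : MemLp x q nu,
        (1 / 2) * δ * b * (nu B).toReal ≤ ‖S (hx.toLp x)‖ ∧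
          0 < (1 / 2) * δ * b * (nu B).toReal := by
  have hVpos : 0 < (nu B).toReal := ENNReal.toReal_pos hBpos.ne' (measure_ne_top nu B)
  set V : ℝ := (nu B).toReal with hV
  set s : ℝ := V ^ (1 / 2 : ℝ) with hs
  have hspos : 0 < s := Real.rpow_pos_of_pos hVpos _
  have hMpos : 0 < ‖S‖ + 1 := by positivity
  have hq0 : q ≠ 0 := (lt_of_lt_of_le zero_lt_one Fact.out).ne'
  have hqrpos : 0 < q.toReal := ENNReal.toReal_pos hq0 hq2
  set T : ℝ := δ * b * V / (8 * (‖S‖ + 1)) with hT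
  have hTpos : 0 < T := by positivity
  refine ⟨min (b * V / (4 * s)) ((b / (2 * s)) * T ^ q.toReal), ?_, ?_⟩
  · apply lt_min
    · positivity
    · have : 0 < T ^ q.toReal := Real.rpow_pos_of_pos hTpos _
      positivity
  · intro ε hε hεle hC x hsign hxν hx
    have hε1 : ε ≤ b * V / (4 * s) := hεle.trans (min_le_left _ _)
    have hε2' : ε ≤ (b / (2 * s)) * T ^ q.toReal := hεle.trans (min_le_right _ _)
    have hεs : ε * V ^ (1 / 2 : ℝ) ≤ b * V / 4 := by
      rw [← hs]
      rw [← div_div] at hε1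
      calc ε * s ≤ (b * V / 4 / s) * s := mul_le_mul_of_nonneg_right hε1 hspos.le
        _ = b * V / 4 := div_mul_cancel₀ _ hspos.ne'
    have hε2 : 2 * (ε * V ^ (1 / 2 : ℝ)) / b ≤
        (δ * b * V / (8 * (‖S‖ + 1))) ^ q.toReal := by
      rw [← hs, ← hT]
      have h := mul_le_mul_of_nonneg_right hε2' (show (0:ℝ) ≤ 2 * s / b by positivity)
      have hr : (b / (2 * s)) * T ^ q.toReal * (2 * s / b) = T ^ q.toReal := by
        field_simp
      have hl : 2 * (ε * s) / b = ε * (2 * s / b) := by ring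
      rw [hl]
      rw [hr] at h
      exact h
    have hpos : 0 < (1 / 2) * δ * b * V := by positivity
    refine ⟨?_, hpos⟩
    rcases le_or_gt 0 (∫ t, x t ∂lam) with hpos' | hneg
    · exact my_aux q hq2 nu lam hna S B hB hBpos b δ hb hδ hS ε hε hεs hε2 hC
        x hsign hxν hx hpos'
    · have hnx : IsSignOn (-x) B := ⟨hsign.1.neg, fun t => by
        rw [show (-x) t = -(x t) from rfl, neg_sq]; exact hsign.2 t⟩
      have hnxν : (∫ t, (-x) t ∂nu) = 0 := by
        simp only [Pi.neg_apply, integral_neg, hxν, neg_zero]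
      have hnxmem : MemLp (-x) q nu := hx.neg
      have hnxlam : 0 ≤ ∫ t, (-x) t ∂lam := by
        simp only [Pi.neg_apply, integral_neg]
        linarith
      have h := my_aux q hq2 nu lam hna S B hB hBpos b δ hb hδ hS ε hε hεs hε2 hC
        (-x) hnx hnxν hnxmem hnxlam
      have heq : hnxmem.toLp (-x) = -(hx.toLp x) := by
        have := MemLp.toLp_neg hx
        rw [← this]
      rwa [heq, map_neg, norm_neg] at h
end
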